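/- Let n ≥ 2. A permutation π of {1,...,n} avoids the four patterns 12-3 (no i, i+1 < k with π(i) < π(i+1) < π(k)), 2-13 (no i < j with π(j) < π(i) < π(j+1)), 2-31 (no i < j with π(j+1) < π(i) < π(j)), and 32-1 (no i, i+1 < k with π(k) < π(i+1) < π(i)) if and only if π is one of the two alternating permutations 1 n 2 (n−1) 3 (n−2) ... or n 1 (n−1) 2 (n−2) 3 .... In particular, there are exactly 2 such permutations of each length n ≥ 2. -/
import Mathlib

theorem main_v (n : ℕ) (hn : 2 ≤ n) (v : ℕ → ℕ)
    (hvlt : ∀ i, i < n → v i < n)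
    (hinj : ∀ i, i < n → ∀ j, j < n → v i = v j → i = j)
    (hsurj : ∀ m, m < n → ∃ k, k < n ∧ v k = m)
    (hL1 : ∀ i k, i + 1 < k → k < n → v i < v (i + 1) → v k < v (i + 1))
    (hL2 : ∀ i k, i + 1 < k → k < n → v (i + 1) < v i → v (i + 1) < v k)
    (hL4 : ∀ i j, i < j → j + 1 < n → ¬ (v (j + 1) < v i ∧ v i < v j))
    (h01 : v 0 < v 1) :
    ∀ i, i < n → (i % 2 = 0 → v i = i / 2) ∧ (i % 2 = 1 → v i = n - 1 - i / 2) := by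
  have hv1 : v 1 = n - 1 := by
    have hmax : ∀ k, k < n → v k ≤ v 1 := by
      intro k hk
      rcases Nat.lt_trichotomy k 1 with h | h | h
      · interval_cases k
        exact le_of_lt h01
      · subst h; exact le_rfl
      · exact le_of_lt (hL1 0 k h hk h01)
    obtain ⟨k, hk, hvk⟩ := hsurj (n - 1) (by omega)
    have h1 := hmax k hk
    have h2 := hvlt 1 (by omega)
    omega
  have hv0 : v 0 = 0 := by
    have hmin : ∀ k, k < n → k ≠ 0 → v 0 < v k := by
      intro k
      induction k using Nat.strong_induction_on with
      | _ k IH =>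
        intro hk hk0
        rcases Nat.lt_trichotomy k 1 with h | h | h
        · omega
        · subst h; exact h01
        · have hprev : v 0 < v (k - 1) := by
            rcases eq_or_ne (k - 1) 1 with h1 | h1
            · rw [h1]; exact h01
            · exact IH (k - 1) (by omega) (by omega) (by omega)
          have h4 := hL4 0 (k - 1) (by omega) (by omega)
          rw [show k - 1 + 1 = k from by omega] at h4
          have hne : v 0 ≠ v k := fun he => absurd (hinj 0 (by omega) k hk he) (by omega)
          omega
    obtain ⟨k, hk, hvk⟩ := hsurj 0 (by omega)
    rcases eq_or_ne k 0 with h | h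
    · subst h; omega
    · have := hmin k hk h
      omega
  intro i
  induction i using Nat.strong_induction_on with
  | _ i IH =>
    intro hi
    rcases Nat.lt_or_ge i 2 with h2 | h2
    · interval_cases i
      · exact ⟨fun _ => hv0, fun h => by omega⟩
      · exact ⟨fun h => by omega, fun _ => by rw [hv1]; omega⟩
    · obtain ⟨j, rfl⟩ : ∃ j, i = j + 1 := ⟨i - 1, by omega⟩
      have hIH : ∀ m, m < j + 1 → (m % 2 = 0 → v m = m / 2) ∧ (m % 2 = 1 → v m = n - 1 - m / 2) :=
        fun m hm => IH m hm (by omega)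
      -- used values: positions < j+1 occupy {0..(j+2)/2-1} ∪ {n-(j+1)/2 .. n-1}
      have hused : ∀ k, j + 1 ≤ k → k < n → (j + 2) / 2 ≤ v k ∧ v k ≤ n - 1 - (j + 1) / 2 := by
        intro k hik hk
        have hvk := hvlt k hk
        constructor
        · by_contra hcon
          push_neg at hcon
          have hj : v (2 * v k) = v k := by
            have := (hIH (2 * v k) (by omega)).1 (by omega)
            omega
          have := hinj (2 * v k) (by omega) k hk hj
          omega
        · by_contra hcon
          push_neg at hcon
          have hj : v (2 * (n - 1 - v k) + 1) = v k := by
            have := (hIH (2 * (n - 1 - v k) + 1) (by omega)).2 (by omega)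
            omega
          have := hinj (2 * (n - 1 - v k) + 1) (by omega) k hk hj
          omega
      have hii := hused (j + 1) le_rfl hi
      rcases Nat.mod_two_eq_zero_or_one (j + 1) with hpar | hpar
      · -- j+1 even: target v (j+1) = (j+1)/2
        refine ⟨fun _ => ?_, fun h => by omega⟩
        have hprev : v j = n - 1 - j / 2 := (hIH j (by omega)).2 (by omega)
        obtain ⟨k₀, hk₀, hvk₀⟩ := hsurj ((j + 1) / 2) (by omega)
        have hk₀i : j + 1 ≤ k₀ := by
          by_contra hlt
          push_neg at hlt
          rcases Nat.mod_two_eq_zero_or_one k₀ with hp | hp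
          · have := (hIH k₀ hlt).1 hp; omega
          · have := (hIH k₀ hlt).2 hp
            have := hvlt k₀ (by omega)
            omega
        rcases eq_or_lt_of_le hk₀i with he | hlt
        · subst he; omega
        · exfalso
          have hdes : v (j + 1) < v j := by omega
          have := hL2 j k₀ hlt hk₀ hdes
          omega
      · -- j+1 odd: target v (j+1) = n - 1 - (j+1)/2
        refine ⟨fun h => by omega, fun _ => ?_⟩
        have hprev : v j = j / 2 := (hIH j (by omega)).1 (by omega)
        obtain ⟨k₀, hk₀, hvk₀⟩ := hsurj (n - 1 - (j + 1) / 2) (by omega)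
        have hk₀i : j + 1 ≤ k₀ := by
          by_contra hlt
          push_neg at hlt
          rcases Nat.mod_two_eq_zero_or_one k₀ with hp | hp
          · have := (hIH k₀ hlt).1 hp; omega
          · have := (hIH k₀ hlt).2 hp
            have := hvlt k₀ (by omega)
            omega
        rcases eq_or_lt_of_le hk₀i with he | hlt
        · subst he; omega
        · exfalso
          have hasc : v j < v (j + 1) := by omega
          have := hL1 j k₀ hlt hk₀ hasc
          omega

def Pat {n : ℕ} (π : Equiv.Perm (Fin n)) : Prop :=
  (¬ (∃ (i k : Fin n) (h : (i : ℕ) + 1 < n), (i : ℕ) + 1 < (k : ℕ) ∧ π i < π ⟨(i : ℕ) + 1, h⟩ ∧ π ⟨(i : ℕ) + 1, h⟩ < π k)) ∧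
  (¬ (∃ (i j : Fin n) (h : (j : ℕ) + 1 < n), i < j ∧ π j < π i ∧ π i < π ⟨(j : ℕ) + 1, h⟩)) ∧
  (¬ (∃ (i j : Fin n) (h : (j : ℕ) + 1 < n), i < j ∧ π ⟨(j : ℕ) + 1, h⟩ < π i ∧ π i < π j)) ∧
  (¬ (∃ (i k : Fin n) (h : (i : ℕ) + 1 < n), (i : ℕ) + 1 < (k : ℕ) ∧ π k < π ⟨(i : ℕ) + 1, h⟩ ∧ π ⟨(i : ℕ) + 1, h⟩ < π i))

def FormA {n : ℕ} (π : Equiv.Perm (Fin n)) : Prop :=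
  ∀ i : Fin n, ((i : ℕ) % 2 = 0 → (π i : ℕ) = (i : ℕ) / 2) ∧ ((i : ℕ) % 2 = 1 → (π i : ℕ) = n - 1 - (i : ℕ) / 2)

def FormB {n : ℕ} (π : Equiv.Perm (Fin n)) : Prop :=
  ∀ i : Fin n, ((i : ℕ) % 2 = 0 → (π i : ℕ) = n - 1 - (i : ℕ) / 2) ∧ ((i : ℕ) % 2 = 1 → (π i : ℕ) = (i : ℕ) / 2)

/-- reversal of values -/
def rv {n : ℕ} (π : Equiv.Perm (Fin n)) : Equiv.Perm (Fin n) := π.trans (Fin.revPerm)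

lemma rv_apply {n : ℕ} (π : Equiv.Perm (Fin n)) (i : Fin n) : rv π i = Fin.rev (π i) := rfl

lemma rv_rv {n : ℕ} (π : Equiv.Perm (Fin n)) : rv (rv π) = π := by
  ext i
  simp [rv, Fin.rev_rev]

lemma pat_rv {n : ℕ} (π : Equiv.Perm (Fin n)) (h : Pat π) : Pat (rv π) := by
  obtain ⟨h1, h2, h3, h4⟩ := h
  refine ⟨?_, ?_, ?_, ?_⟩
  · rintro ⟨i, k, hh, hik, ha, hb⟩
    simp only [rv_apply, Fin.rev_lt_rev] at ha hb
    exact h4 ⟨i, k, hh, hik, hb, ha⟩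
  · rintro ⟨i, j, hh, hij, ha, hb⟩
    simp only [rv_apply, Fin.rev_lt_rev] at ha hb
    exact h3 ⟨i, j, hh, hij, hb, ha⟩
  · rintro ⟨i, j, hh, hij, ha, hb⟩
    simp only [rv_apply, Fin.rev_lt_rev] at ha hb
    exact h2 ⟨i, j, hh, hij, hb, ha⟩
  · rintro ⟨i, k, hh, hik, ha, hb⟩
    simp only [rv_apply, Fin.rev_lt_rev] at ha hb
    exact h1 ⟨i, k, hh, hik, hb, ha⟩

lemma formB_iff {n : ℕ} (π : Equiv.Perm (Fin n)) : FormB π ↔ FormA (rv π) := by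
  constructor
  · intro h i
    obtain ⟨ha, hb⟩ := h i
    have h1 := (π i).isLt
    have h2 := i.isLt
    rw [rv_apply, Fin.val_rev]
    exact ⟨fun hp => by have := ha hp; omega, fun hp => by have := hb hp; omega⟩
  · intro h i
    obtain ⟨ha, hb⟩ := h i
    rw [rv_apply, Fin.val_rev] at ha hb
    have h1 := (π i).isLt
    have h2 := i.isLt
    exact ⟨fun hp => by have := ha hp; omega, fun hp => by have := hb hp; omega⟩

lemma formA_val {n : ℕ} {π : Equiv.Perm (Fin n)} (h : FormA π) (x : Fin n) :
    (π x : ℕ) = if (x : ℕ) % 2 = 0 then (x : ℕ) / 2 else n - 1 - (x : ℕ) / 2 := by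
  obtain ⟨ha, hb⟩ := h x
  rcases Nat.mod_two_eq_zero_or_one (x : ℕ) with hp | hp
  · rw [if_pos hp]; exact ha hp
  · rw [if_neg (by omega)]; exact hb hp

lemma formA_pat {n : ℕ} (hn : 2 ≤ n) (π : Equiv.Perm (Fin n)) (h : FormA π) : Pat π := by
  refine ⟨?_, ?_, ?_, ?_⟩
  · rintro ⟨i, k, hh, hik, ha, hb⟩
    rw [Fin.lt_def] at ha hb
    have e1 := formA_val h i
    have e2 := formA_val h ⟨(i : ℕ) + 1, hh⟩
    have e3 := formA_val h k
    simp only [Fin.val_mk] at e2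
    have hi := i.isLt
    have hk := k.isLt
    split_ifs at e1 e2 e3 <;> omega
  · rintro ⟨i, j, hh, hij, ha, hb⟩
    rw [Fin.lt_def] at ha hb hij
    have e1 := formA_val h i
    have e2 := formA_val h j
    have e3 := formA_val h ⟨(j : ℕ) + 1, hh⟩
    simp only [Fin.val_mk] at e3
    have hi := i.isLt
    have hj := j.isLt
    split_ifs at e1 e2 e3 <;> omega
  · rintro ⟨i, j, hh, hij, ha, hb⟩
    rw [Fin.lt_def] at ha hb hij
    have e1 := formA_val h i
    have e2 := formA_val h j
    have e3 := formA_val h ⟨(j : ℕ) + 1, hh⟩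
    simp only [Fin.val_mk] at e3
    have hi := i.isLt
    have hj := j.isLt
    split_ifs at e1 e2 e3 <;> omega
  · rintro ⟨i, k, hh, hik, ha, hb⟩
    rw [Fin.lt_def] at ha hb
    have e1 := formA_val h i
    have e2 := formA_val h ⟨(i : ℕ) + 1, hh⟩
    have e3 := formA_val h k
    simp only [Fin.val_mk] at e2
    have hi := i.isLt
    have hk := k.isLt
    split_ifs at e1 e2 e3 <;> omega

noncomputable def perm1 (n : ℕ) (hn : 2 ≤ n) : Equiv.Perm (Fin n) :=
  Equiv.ofBijective
    (fun i => (⟨if (i : ℕ) % 2 = 0 then (i : ℕ) / 2 else n - 1 - (i : ℕ) / 2, by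
        have := i.isLt; split_ifs <;> omega⟩ : Fin n))
    (Finite.injective_iff_bijective.mp (by
      intro x y hxy
      have hx := x.isLt
      have hy := y.isLt
      rw [Fin.mk.injEq] at hxy
      apply Fin.ext
      split_ifs at hxy <;> omega))

lemma formA_perm1 (n : ℕ) (hn : 2 ≤ n) : FormA (perm1 n hn) := by
  intro i
  have : ((perm1 n hn) i : ℕ) = if (i : ℕ) % 2 = 0 then (i : ℕ) / 2 else n - 1 - (i : ℕ) / 2 := rfl
  constructor
  · intro hp; rw [this, if_pos hp]
  · intro hp; rw [this, if_neg (by omega)]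

lemma formA_unique {n : ℕ} {π σ : Equiv.Perm (Fin n)} (hπ : FormA π) (hσ : FormA σ) : π = σ := by
  apply Equiv.ext
  intro i
  apply Fin.ext
  rw [formA_val hπ i, formA_val hσ i]

lemma pat_formA {n : ℕ} (hn : 2 ≤ n) (π : Equiv.Perm (Fin n)) (hP : Pat π)
    (h01 : π ⟨0, by omega⟩ < π ⟨1, by omega⟩) : FormA π := by
  obtain ⟨h1, h2, h3, h4⟩ := hP
  set v : ℕ → ℕ := fun i => if h : i < n then (π ⟨i, h⟩ : ℕ) else 0 with hv
  have hvdef : ∀ i (h : i < n), v i = (π ⟨i, h⟩ : ℕ) := fun i h => dif_pos h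
  have hvlt : ∀ i, i < n → v i < n := by
    intro i h; rw [hvdef i h]; exact (π ⟨i, h⟩).isLt
  have hinj : ∀ i, i < n → ∀ j, j < n → v i = v j → i = j := by
    intro i hi j hj he
    rw [hvdef i hi, hvdef j hj] at he
    have := π.injective (Fin.val_injective he)
    simpa using congrArg Fin.val this
  have hsurj : ∀ m, m < n → ∃ k, k < n ∧ v k = m := by
    intro m hm
    refine ⟨(π.symm ⟨m, hm⟩ : ℕ), (π.symm ⟨m, hm⟩).isLt, ?_⟩
    rw [hvdef _ (π.symm ⟨m, hm⟩).isLt]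
    simp
  have hL1 : ∀ i k, i + 1 < k → k < n → v i < v (i + 1) → v k < v (i + 1) := by
    intro i k hik hk hasc
    have hi : i < n := by omega
    have hi1 : i + 1 < n := by omega
    rcases Nat.lt_trichotomy (v k) (v (i + 1)) with h | h | h
    · exact h
    · exact absurd (hinj k hk (i + 1) hi1 h) (by omega)
    · exfalso
      rw [hvdef i hi, hvdef (i + 1) hi1] at hasc
      rw [hvdef k hk, hvdef (i + 1) hi1] at h
      exact h1 ⟨⟨i, hi⟩, ⟨k, hk⟩, hi1, hik, Fin.lt_def.mpr hasc, Fin.lt_def.mpr h⟩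
  have hL2 : ∀ i k, i + 1 < k → k < n → v (i + 1) < v i → v (i + 1) < v k := by
    intro i k hik hk hdes
    have hi : i < n := by omega
    have hi1 : i + 1 < n := by omega
    rcases Nat.lt_trichotomy (v (i + 1)) (v k) with h | h | h
    · exact h
    · exact absurd (hinj (i + 1) hi1 k hk h) (by omega)
    · exfalso
      rw [hvdef i hi, hvdef (i + 1) hi1] at hdes
      rw [hvdef k hk, hvdef (i + 1) hi1] at h
      exact h4 ⟨⟨i, hi⟩, ⟨k, hk⟩, hi1, hik, Fin.lt_def.mpr h, Fin.lt_def.mpr hdes⟩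
  have hL4 : ∀ i j, i < j → j + 1 < n → ¬ (v (j + 1) < v i ∧ v i < v j) := by
    rintro i j hij hj1 ⟨ha, hb⟩
    have hi : i < n := by omega
    have hj : j < n := by omega
    rw [hvdef (j + 1) hj1, hvdef i hi] at ha
    rw [hvdef i hi, hvdef j hj] at hb
    exact h3 ⟨⟨i, hi⟩, ⟨j, hj⟩, hj1, Fin.mk_lt_mk.mpr hij, Fin.lt_def.mpr ha, Fin.lt_def.mpr hb⟩
  have h01' : v 0 < v 1 := by
    rw [hvdef 0 (by omega), hvdef 1 (by omega)]
    exact Fin.lt_def.mp h01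
  have key := main_v n hn v hvlt hinj hsurj hL1 hL2 hL4 h01'
  intro i
  have hi := i.isLt
  have hk := key (i : ℕ) hi
  rw [hvdef (i : ℕ) hi] at hk
  simpa using hk

lemma pat_form {n : ℕ} (hn : 2 ≤ n) (π : Equiv.Perm (Fin n)) (hP : Pat π) :
    FormA π ∨ FormB π := by
  have hne : π ⟨0, by omega⟩ ≠ π ⟨1, by omega⟩ := by
    intro h
    have := π.injective h
    simp [Fin.mk.injEq] at this
  rcases lt_or_gt_of_ne hne with h | h
  · exact Or.inl (pat_formA hn π hP h)
  · right
    rw [formB_iff]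
    exact pat_formA hn (rv π) (pat_rv π hP) (Fin.rev_lt_rev.mpr h)

lemma formB_pat {n : ℕ} (hn : 2 ≤ n) (π : Equiv.Perm (Fin n)) (h : FormB π) : Pat π := by
  have := formA_pat hn (rv π) ((formB_iff π).mp h)
  have h2 := pat_rv (rv π) this
  rwa [rv_rv] at h2

theorem stmt_16 (n : ℕ) (hn : 2 ≤ n) :
    (∀ π : Equiv.Perm (Fin n),
      ((¬ (∃ (i k : Fin n) (h : (i : ℕ) + 1 < n), (i : ℕ) + 1 < (k : ℕ) ∧ π i < π ⟨(i : ℕ) + 1, h⟩ ∧ π ⟨(i : ℕ) + 1, h⟩ < π k)) ∧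
      (¬ (∃ (i j : Fin n) (h : (j : ℕ) + 1 < n), i < j ∧ π j < π i ∧ π i < π ⟨(j : ℕ) + 1, h⟩)) ∧
      (¬ (∃ (i j : Fin n) (h : (j : ℕ) + 1 < n), i < j ∧ π ⟨(j : ℕ) + 1, h⟩ < π i ∧ π i < π j)) ∧
      (¬ (∃ (i k : Fin n) (h : (i : ℕ) + 1 < n), (i : ℕ) + 1 < (k : ℕ) ∧ π k < π ⟨(i : ℕ) + 1, h⟩ ∧ π ⟨(i : ℕ) + 1, h⟩ < π i)))
      ↔
      ((∀ i : Fin n, ((i : ℕ) % 2 = 0 → (π i : ℕ) = (i : ℕ) / 2) ∧ ((i : ℕ) % 2 = 1 → (π i : ℕ) = n - 1 - (i : ℕ) / 2)) ∨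
      (∀ i : Fin n, ((i : ℕ) % 2 = 0 → (π i : ℕ) = n - 1 - (i : ℕ) / 2) ∧ ((i : ℕ) % 2 = 1 → (π i : ℕ) = (i : ℕ) / 2)))) ∧
    Set.ncard {π : Equiv.Perm (Fin n) |
      (¬ (∃ (i k : Fin n) (h : (i : ℕ) + 1 < n), (i : ℕ) + 1 < (k : ℕ) ∧ π i < π ⟨(i : ℕ) + 1, h⟩ ∧ π ⟨(i : ℕ) + 1, h⟩ < π k)) ∧
      (¬ (∃ (i j : Fin n) (h : (j : ℕ) + 1 < n), i < j ∧ π j < π i ∧ π i < π ⟨(j : ℕ) + 1, h⟩)) ∧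
      (¬ (∃ (i j : Fin n) (h : (j : ℕ) + 1 < n), i < j ∧ π ⟨(j : ℕ) + 1, h⟩ < π i ∧ π i < π j)) ∧
      (¬ (∃ (i k : Fin n) (h : (i : ℕ) + 1 < n), (i : ℕ) + 1 < (k : ℕ) ∧ π k < π ⟨(i : ℕ) + 1, h⟩ ∧ π ⟨(i : ℕ) + 1, h⟩ < π i))} = 2 := by
  have hKey : ∀ π : Equiv.Perm (Fin n), Pat π ↔ (FormA π ∨ FormB π) := by
    intro π
    constructor
    · exact pat_form hn π
    · rintro (h | h)
      · exact formA_pat hn π h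
      · exact formB_pat hn π h
  constructor
  · exact fun π => hKey π
  · have hset : {π : Equiv.Perm (Fin n) |
      (¬ (∃ (i k : Fin n) (h : (i : ℕ) + 1 < n), (i : ℕ) + 1 < (k : ℕ) ∧ π i < π ⟨(i : ℕ) + 1, h⟩ ∧ π ⟨(i : ℕ) + 1, h⟩ < π k)) ∧
      (¬ (∃ (i j : Fin n) (h : (j : ℕ) + 1 < n), i < j ∧ π j < π i ∧ π i < π ⟨(j : ℕ) + 1, h⟩)) ∧
      (¬ (∃ (i j : Fin n) (h : (j : ℕ) + 1 < n), i < j ∧ π ⟨(j : ℕ) + 1, h⟩ < π i ∧ π i < π j)) ∧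
      (¬ (∃ (i k : Fin n) (h : (i : ℕ) + 1 < n), (i : ℕ) + 1 < (k : ℕ) ∧ π k < π ⟨(i : ℕ) + 1, h⟩ ∧ π ⟨(i : ℕ) + 1, h⟩ < π i))}
        = {perm1 n hn, rv (perm1 n hn)} := by
      ext π
      simp only [Set.mem_setOf_eq, Set.mem_insert_iff, Set.mem_singleton_iff]
      constructor
      · intro h
        rcases (hKey π).mp h with hA | hB
        · exact Or.inl (formA_unique hA (formA_perm1 n hn))
        · right
          have he := formA_unique ((formB_iff π).mp hB) (formA_perm1 n hn)
          have := congrArg rv he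
          rwa [rv_rv] at this
      · rintro (rfl | rfl)
        · exact (hKey _).mpr (Or.inl (formA_perm1 n hn))
        · refine (hKey _).mpr (Or.inr ((formB_iff _).mpr ?_))
          rw [rv_rv]
          exact formA_perm1 n hn
    rw [hset, Set.ncard_pair]
    intro h
    have h0 : ((perm1 n hn) ⟨0, by omega⟩ : ℕ) = 0 := by
      simpa using (formA_perm1 n hn ⟨0, by omega⟩).1 rfl
    have h1 : ((rv (perm1 n hn)) ⟨0, by omega⟩ : ℕ) = n - 1 - 0 := by
      simpa using ((formB_iff _).mpr (by rw [rv_rv]; exact formA_perm1 n hn) ⟨0, by omega⟩).1 rfl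
    rw [← h] at h1
    omega
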